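/- Let μ be an entire, finite, nondegenerate, nonlocalized and irreducible K-type projection, and let θ ∈ ℝ^K be such that μ_θ is critical with asymptotic direction X_θ (the normalized left 1-eigenvector of M_θ with positive coordinates). Then θ is the unique global maximizer of the function f_{X_θ}(·) = −X_θ^⊺ χ(·) on ℝ^K. -/

import Mathlib

open scoped BigOperators

/-- Spectral radius of a real square matrix. -/
noncomputable def matrixSpectralRadius {n : ℕ} (M : Matrix (Fin n) (Fin n) ℝ) : ℝ :=
  sSup ((fun z : ℂ => ‖z‖) '' spectrum ℂ (M.map (Complex.ofReal)))

/-- if `μ_θ` is critical with asymptotic direction `X_θ`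
(normalized positive left 1-eigenvector of `M_θ`), then `θ` is the unique
global maximizer of `f_{X_θ}(·) = −X_θᵀ χ(·)` on `ℝ^K`. -/
theorem critical_parameter_unique_maximizer
    (K : ℕ) (μ : Fin K → (Fin K → ℕ) → ℝ)
    (hpos : ∀ i k, 0 ≤ μ i k) (hsum : ∀ i, HasSum (μ i) 1)
    -- entire
    (hent : ∀ i (x : Fin K → ℝ), Summable (fun k : Fin K → ℕ => μ i k * ∏ j, x j ^ k j))
    (φ : Fin K → (Fin K → ℝ) → ℝ)
    (hφ : ∀ i x, φ i x = ∑' k : Fin K → ℕ, μ i k * ∏ j, x j ^ k j)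
    -- finite: there is a positive fixed point of the generating functions in (0,1]^K
    (hfin : ∃ p : Fin K → ℝ, (∀ i, 0 < p i ∧ p i ≤ 1) ∧ ∀ i, φ i p = p i)
    -- nondegenerate
    (hnondeg : ∃ (i : Fin K) (k : Fin K → ℕ), 2 ≤ ∑ j, k j ∧ 0 < μ i k)
    -- nonlocalized
    (hnonloc : ∀ Z : Fin K → ℝ, Z ≠ 0 →
      ∃ (i : Fin K) (k k' : Fin K → ℕ), 0 < μ i k ∧ 0 < μ i k' ∧
        (∑ j, Z j * k j) ≠ (∑ j, Z j * k' j))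
    -- irreducible mean matrix
    (M : Matrix (Fin K) (Fin K) ℝ)
    (hM : ∀ i j, M i j = ∑' k : Fin K → ℕ, μ i k * k j)
    (hirr : ∀ i j, ∃ m : ℕ, 0 < m ∧ 0 < (M ^ m) i j)
    -- a critical tilting parameter θ, with mean matrix Mθ of the tilted family
    (θ : Fin K → ℝ)
    (Mθ : Matrix (Fin K) (Fin K) ℝ)
    (hMθ : ∀ i j, Mθ i j =
      (∑' k : Fin K → ℕ, μ i k * Real.exp (∑ l, θ l * k l) * k j) /
        (∑' k : Fin K → ℕ, μ i k * Real.exp (∑ l, θ l * k l)))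
    (hcrit : matrixSpectralRadius Mθ = 1)
    -- the asymptotic direction: normalized positive left 1-eigenvector of Mθ
    (X : Fin K → ℝ)
    (hXpos : ∀ i, 0 < X i) (hXnorm : ∑ i, X i = 1)
    (hXeig : Matrix.vecMul X Mθ = X) :
    ∀ t : Fin K → ℝ,
      (-(∑ i, X i * (Real.log (φ i (fun j => Real.exp (t j))) - t i))
        ≤ -(∑ i, X i * (Real.log (φ i (fun j => Real.exp (θ j))) - θ i))) ∧
      (t ≠ θ →
        -(∑ i, X i * (Real.log (φ i (fun j => Real.exp (t j))) - t i))
          < -(∑ i, X i * (Real.log (φ i (fun j => Real.exp (θ j))) - θ i))) := by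
  classical
  intro t
  -- the direction Z = t - θ
  set Z : Fin K → ℝ := fun j => t j - θ j with hZdef
  -- product of powers of exponentials is exponential of linear form
  have hexp : ∀ (v : Fin K → ℝ) (k : Fin K → ℕ),
      (∏ j, Real.exp (v j) ^ k j) = Real.exp (∑ l, v l * (k l : ℝ)) := by
    intro v k
    rw [Real.exp_sum]
    exact Finset.prod_congr rfl fun j _ => by rw [mul_comm, Real.exp_nat_mul]
  -- summability of all exponential tilts
  have key : ∀ (v : Fin K → ℝ) (i : Fin K),
      Summable (fun k : Fin K → ℕ => μ i k * Real.exp (∑ l, v l * (k l : ℝ))) := by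
    intro v i
    have := hent i (fun j => Real.exp (v j))
    simpa only [hexp v] using this
  -- summability with one coordinate factor
  have keyj : ∀ (i j : Fin K),
      Summable (fun k : Fin K → ℕ =>
        μ i k * Real.exp (∑ l, θ l * (k l : ℝ)) * (k j : ℝ)) := by
    intro i j
    refine Summable.of_nonneg_of_le (fun k => ?_) (fun k => ?_)
      (key (fun l => θ l + if l = j then 1 else 0) i)
    · exact mul_nonneg (mul_nonneg (hpos i k) (Real.exp_pos _).le) (Nat.cast_nonneg _)
    · have h1 : (∑ l, (θ l + if l = j then (1:ℝ) else 0) * (k l : ℝ))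
          = (∑ l, θ l * (k l : ℝ)) + (k j : ℝ) := by
        have e : ∀ l, (θ l + if l = j then (1:ℝ) else 0) * (k l : ℝ)
            = θ l * (k l : ℝ) + (if l = j then (k l : ℝ) else 0) := by
          intro l; by_cases h : l = j <;> simp [h] <;> ring
        rw [Finset.sum_congr rfl (fun l _ => e l), Finset.sum_add_distrib,
          Finset.sum_ite_eq' Finset.univ j (fun l => (k l : ℝ))]
        simp
      have hk : (k j : ℝ) ≤ Real.exp (k j) := by
        have := Real.add_one_le_exp (k j : ℝ); linarith
      calc μ i k * Real.exp (∑ l, θ l * (k l : ℝ)) * (k j : ℝ)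
          ≤ μ i k * Real.exp (∑ l, θ l * (k l : ℝ)) * Real.exp (k j) :=
            mul_le_mul_of_nonneg_left hk
              (mul_nonneg (hpos i k) (Real.exp_pos _).le)
        _ = μ i k * Real.exp ((∑ l, θ l * (k l : ℝ)) + (k j : ℝ)) := by
            rw [Real.exp_add]; ring
        _ = μ i k * Real.exp (∑ l, (θ l + if l = j then (1:ℝ) else 0) * (k l : ℝ)) := by
            rw [h1]
  -- abbreviations
  set A : Fin K → ℝ :=
    fun i => ∑' k : Fin K → ℕ, μ i k * Real.exp (∑ l, θ l * (k l : ℝ)) with hAdef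
  set B : Fin K → ℝ :=
    fun i => ∑' k : Fin K → ℕ, μ i k * Real.exp (∑ l, t l * (k l : ℝ)) with hBdef
  have hAeq : ∀ i, A i = ∑' k : Fin K → ℕ, μ i k * Real.exp (∑ l, θ l * (k l : ℝ)) :=
    fun i => rfl
  have hBeq : ∀ i, B i = ∑' k : Fin K → ℕ, μ i k * Real.exp (∑ l, t l * (k l : ℝ)) :=
    fun i => rfl
  -- positivity of A
  have hApos : ∀ i, 0 < A i := by
    intro i
    obtain ⟨k0, hk0⟩ : ∃ k, 0 < μ i k := by
      by_contra h
      push_neg at h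
      have hz : μ i = fun _ => (0:ℝ) := funext fun k => le_antisymm (h k) (hpos i k)
      have h10 : (1:ℝ) = 0 := (hsum i).unique (by rw [hz]; exact hasSum_zero)
      norm_num at h10
    have h1 : μ i k0 * Real.exp (∑ l, θ l * (k0 l : ℝ)) ≤ A i :=
      Summable.le_tsum (key θ i) k0 fun k _ => mul_nonneg (hpos i k) (Real.exp_pos _).le
    have h2 : 0 < μ i k0 * Real.exp (∑ l, θ l * (k0 l : ℝ)) :=
      mul_pos hk0 (Real.exp_pos _)
    linarith
  -- the drift c i = ∑ j Z j Mθ i j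
  set c : Fin K → ℝ := fun i => ∑ j, Z j * Mθ i j with hcdef
  -- summability of the linearly-weighted tilt
  have hsplitZ : ∀ i, (fun k : Fin K → ℕ =>
      μ i k * Real.exp (∑ l, θ l * (k l : ℝ)) * (∑ j, Z j * (k j : ℝ)))
      = fun k => ∑ j, Z j * (μ i k * Real.exp (∑ l, θ l * (k l : ℝ)) * (k j : ℝ)) := by
    intro i
    funext k
    rw [Finset.mul_sum]
    exact Finset.sum_congr rfl fun j _ => by ring
  have hSZsum : ∀ i, Summable (fun k : Fin K → ℕ =>
      μ i k * Real.exp (∑ l, θ l * (k l : ℝ)) * (∑ j, Z j * (k j : ℝ))) := by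
    intro i
    rw [hsplitZ i]
    exact summable_sum fun j _ => (keyj i j).mul_left (Z j)
  -- c i * A i is the weighted tsum
  have hcA : ∀ i, c i * A i
      = ∑' k : Fin K → ℕ,
          μ i k * Real.exp (∑ l, θ l * (k l : ℝ)) * (∑ j, Z j * (k j : ℝ)) := by
    intro i
    have h1 : (∑' k : Fin K → ℕ,
        μ i k * Real.exp (∑ l, θ l * (k l : ℝ)) * (∑ j, Z j * (k j : ℝ)))
        = ∑ j, Z j * ∑' k : Fin K → ℕ,
            μ i k * Real.exp (∑ l, θ l * (k l : ℝ)) * (k j : ℝ) := by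
      rw [hsplitZ i, Summable.tsum_finsetSum fun j _ => (keyj i j).mul_left (Z j)]
      exact Finset.sum_congr rfl fun j _ => tsum_mul_left
    rw [h1, hcdef, Finset.sum_mul]
    refine Finset.sum_congr rfl fun j _ => ?_
    rw [hMθ i j, mul_assoc, div_mul_cancel₀ _ (hApos i).ne']
  -- splitting t = θ + Z in the linear form
  have hSt : ∀ k : Fin K → ℕ,
      (∑ l, t l * (k l : ℝ)) = (∑ l, θ l * (k l : ℝ)) + (∑ l, Z l * (k l : ℝ)) := by
    intro k
    rw [← Finset.sum_add_distrib]
    refine Finset.sum_congr rfl fun l _ => ?_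
    show t l * (k l : ℝ) = θ l * (k l : ℝ) + (t l - θ l) * (k l : ℝ)
    ring
  -- the comparison function and its sum
  have hgsum : ∀ i, Summable (fun k : Fin K → ℕ =>
      Real.exp (c i) * ((1 - c i) * (μ i k * Real.exp (∑ l, θ l * (k l : ℝ)))
        + μ i k * Real.exp (∑ l, θ l * (k l : ℝ)) * (∑ j, Z j * (k j : ℝ)))) :=
    fun i => (((key θ i).mul_left (1 - c i)).add (hSZsum i)).mul_left _
  have hgtsum : ∀ i, (∑' k : Fin K → ℕ,
      Real.exp (c i) * ((1 - c i) * (μ i k * Real.exp (∑ l, θ l * (k l : ℝ)))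
        + μ i k * Real.exp (∑ l, θ l * (k l : ℝ)) * (∑ j, Z j * (k j : ℝ))))
      = A i * Real.exp (c i) := by
    intro i
    rw [tsum_mul_left, Summable.tsum_add ((key θ i).mul_left _) (hSZsum i), tsum_mul_left,
      ← hcA i, ← hAeq i]
    ring
  -- pointwise comparison
  have hgle : ∀ i (k : Fin K → ℕ),
      Real.exp (c i) * ((1 - c i) * (μ i k * Real.exp (∑ l, θ l * (k l : ℝ)))
        + μ i k * Real.exp (∑ l, θ l * (k l : ℝ)) * (∑ j, Z j * (k j : ℝ)))
      ≤ μ i k * Real.exp (∑ l, t l * (k l : ℝ)) := by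
    intro i k
    have h2 := Real.add_one_le_exp ((∑ j, Z j * (k j : ℝ)) - c i)
    have h1 : Real.exp (c i) * (1 + ((∑ j, Z j * (k j : ℝ)) - c i))
        ≤ Real.exp (∑ j, Z j * (k j : ℝ)) := by
      calc Real.exp (c i) * (1 + ((∑ j, Z j * (k j : ℝ)) - c i))
          ≤ Real.exp (c i) * Real.exp ((∑ j, Z j * (k j : ℝ)) - c i) :=
            mul_le_mul_of_nonneg_left (by linarith) (Real.exp_pos _).le
        _ = Real.exp (∑ j, Z j * (k j : ℝ)) := by rw [← Real.exp_add]; congr 1; ring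
    calc Real.exp (c i) * ((1 - c i) * (μ i k * Real.exp (∑ l, θ l * (k l : ℝ)))
          + μ i k * Real.exp (∑ l, θ l * (k l : ℝ)) * (∑ j, Z j * (k j : ℝ)))
        = (μ i k * Real.exp (∑ l, θ l * (k l : ℝ)))
            * (Real.exp (c i) * (1 + ((∑ j, Z j * (k j : ℝ)) - c i))) := by ring
      _ ≤ (μ i k * Real.exp (∑ l, θ l * (k l : ℝ)))
            * Real.exp (∑ j, Z j * (k j : ℝ)) :=
          mul_le_mul_of_nonneg_left h1 (mul_nonneg (hpos i k) (Real.exp_pos _).le)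
      _ = μ i k * Real.exp (∑ l, t l * (k l : ℝ)) := by rw [hSt k, Real.exp_add]; ring
  -- the main per-coordinate inequality
  have hABle : ∀ i, A i * Real.exp (c i) ≤ B i := by
    intro i
    calc A i * Real.exp (c i)
        = ∑' k : Fin K → ℕ,
            Real.exp (c i) * ((1 - c i) * (μ i k * Real.exp (∑ l, θ l * (k l : ℝ)))
              + μ i k * Real.exp (∑ l, θ l * (k l : ℝ)) * (∑ j, Z j * (k j : ℝ))) :=
          (hgtsum i).symm
      _ ≤ ∑' k : Fin K → ℕ, μ i k * Real.exp (∑ l, t l * (k l : ℝ)) :=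
          Summable.tsum_le_tsum (hgle i) (hgsum i) (key t i)
      _ = B i := (hBeq i).symm
  have hlog : ∀ i, Real.log (A i) + c i ≤ Real.log (B i) := by
    intro i
    have h := Real.log_le_log (mul_pos (hApos i) (Real.exp_pos _)) (hABle i)
    rwa [Real.log_mul (hApos i).ne' (Real.exp_ne_zero _), Real.log_exp] at h
  -- the eigenvector identity
  have hXc : ∑ i, X i * c i = ∑ i, X i * (t i - θ i) := by
    have h1 : ∀ i, X i * c i = ∑ j, Z j * (X i * Mθ i j) := by
      intro i
      rw [hcdef, Finset.mul_sum]
      exact Finset.sum_congr rfl fun j _ => by ring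
    calc ∑ i, X i * c i = ∑ i, ∑ j, Z j * (X i * Mθ i j) :=
          Finset.sum_congr rfl fun i _ => h1 i
      _ = ∑ j, ∑ i, Z j * (X i * Mθ i j) := Finset.sum_comm
      _ = ∑ j, Z j * ∑ i, X i * Mθ i j := by
          exact Finset.sum_congr rfl fun j _ => (Finset.mul_sum _ _ _).symm
      _ = ∑ j, Z j * X j := by
          refine Finset.sum_congr rfl fun j _ => ?_
          congr 1
          have h := congrFun hXeig j
          simpa [Matrix.vecMul, dotProduct] using h
      _ = ∑ i, X i * (t i - θ i) := by
          refine Finset.sum_congr rfl fun j _ => ?_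
          show (t j - θ j) * X j = X j * (t j - θ j)
          ring
  -- identify the φ values
  have hφA : ∀ i, φ i (fun j => Real.exp (θ j)) = A i := by
    intro i
    rw [hφ, hAeq]
    exact tsum_congr fun k => by rw [hexp θ k]
  have hφB : ∀ i, φ i (fun j => Real.exp (t j)) = B i := by
    intro i
    rw [hφ, hBeq]
    exact tsum_congr fun k => by rw [hexp t k]
  -- sum manipulations
  have e1 : ∑ i, X i * (Real.log (A i) + c i)
      = ∑ i, X i * Real.log (A i) + ∑ i, X i * c i := by
    rw [← Finset.sum_add_distrib]
    exact Finset.sum_congr rfl fun i _ => by ring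
  have e2 : ∑ i, X i * (Real.log (A i) - θ i)
      = ∑ i, X i * Real.log (A i) - ∑ i, X i * θ i := by
    rw [← Finset.sum_sub_distrib]
    exact Finset.sum_congr rfl fun i _ => by ring
  have e3 : ∑ i, X i * (Real.log (B i) - t i)
      = ∑ i, X i * Real.log (B i) - ∑ i, X i * t i := by
    rw [← Finset.sum_sub_distrib]
    exact Finset.sum_congr rfl fun i _ => by ring
  have e4 : ∑ i, X i * (t i - θ i) = ∑ i, X i * t i - ∑ i, X i * θ i := by
    rw [← Finset.sum_sub_distrib]
    exact Finset.sum_congr rfl fun i _ => by ring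
  constructor
  · -- non-strict inequality
    have H1 : ∑ i, X i * (Real.log (A i) + c i) ≤ ∑ i, X i * Real.log (B i) :=
      Finset.sum_le_sum fun i _ => mul_le_mul_of_nonneg_left (hlog i) (hXpos i).le
    simp only [hφA, hφB]
    apply neg_le_neg
    rw [e2, e3]
    rw [e1] at H1
    rw [e4] at hXc
    linarith
  · -- strict inequality when t ≠ θ
    intro hne
    have hZne : Z ≠ 0 := by
      intro h
      apply hne
      funext j
      have hj : Z j = 0 := congrFun h j
      have hj' : t j - θ j = 0 := hj
      linarith
    obtain ⟨i0, k1, k2, hμ1, hμ2, hZk⟩ := hnonloc Z hZne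
    obtain ⟨k0, hk0μ, hk0⟩ : ∃ k0 : Fin K → ℕ,
        0 < μ i0 k0 ∧ (∑ j, Z j * (k0 j : ℝ)) ≠ c i0 := by
      by_cases h : (∑ j, Z j * (k1 j : ℝ)) = c i0
      · exact ⟨k2, hμ2, fun hh => hZk (h.trans hh.symm)⟩
      · exact ⟨k1, hμ1, h⟩
    have hstrict : A i0 * Real.exp (c i0) < B i0 := by
      have h2 := Real.add_one_lt_exp (x := (∑ j, Z j * (k0 j : ℝ)) - c i0)
        (sub_ne_zero.mpr hk0)
      have h1 : Real.exp (c i0) * (1 + ((∑ j, Z j * (k0 j : ℝ)) - c i0))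
          < Real.exp (∑ j, Z j * (k0 j : ℝ)) := by
        calc Real.exp (c i0) * (1 + ((∑ j, Z j * (k0 j : ℝ)) - c i0))
            < Real.exp (c i0) * Real.exp ((∑ j, Z j * (k0 j : ℝ)) - c i0) :=
              mul_lt_mul_of_pos_left (by linarith) (Real.exp_pos _)
          _ = Real.exp (∑ j, Z j * (k0 j : ℝ)) := by rw [← Real.exp_add]; congr 1; ring
      have hlt : Real.exp (c i0) * ((1 - c i0) * (μ i0 k0 * Real.exp (∑ l, θ l * (k0 l : ℝ)))
            + μ i0 k0 * Real.exp (∑ l, θ l * (k0 l : ℝ)) * (∑ j, Z j * (k0 j : ℝ)))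
          < μ i0 k0 * Real.exp (∑ l, t l * (k0 l : ℝ)) := by
        calc Real.exp (c i0) * ((1 - c i0) * (μ i0 k0 * Real.exp (∑ l, θ l * (k0 l : ℝ)))
              + μ i0 k0 * Real.exp (∑ l, θ l * (k0 l : ℝ)) * (∑ j, Z j * (k0 j : ℝ)))
            = (μ i0 k0 * Real.exp (∑ l, θ l * (k0 l : ℝ)))
                * (Real.exp (c i0) * (1 + ((∑ j, Z j * (k0 j : ℝ)) - c i0))) := by ring
          _ < (μ i0 k0 * Real.exp (∑ l, θ l * (k0 l : ℝ)))
                * Real.exp (∑ j, Z j * (k0 j : ℝ)) :=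
              mul_lt_mul_of_pos_left h1 (mul_pos hk0μ (Real.exp_pos _))
          _ = μ i0 k0 * Real.exp (∑ l, t l * (k0 l : ℝ)) := by
              rw [hSt k0, Real.exp_add]; ring
      calc A i0 * Real.exp (c i0)
          = ∑' k : Fin K → ℕ,
              Real.exp (c i0) * ((1 - c i0) * (μ i0 k * Real.exp (∑ l, θ l * (k l : ℝ)))
                + μ i0 k * Real.exp (∑ l, θ l * (k l : ℝ)) * (∑ j, Z j * (k j : ℝ))) :=
            (hgtsum i0).symm
        _ < ∑' k : Fin K → ℕ, μ i0 k * Real.exp (∑ l, t l * (k l : ℝ)) :=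
            Summable.tsum_lt_tsum (hgle i0) hlt (hgsum i0) (key t i0)
        _ = B i0 := (hBeq i0).symm
    have hlogs : Real.log (A i0) + c i0 < Real.log (B i0) := by
      have h := Real.log_lt_log (mul_pos (hApos i0) (Real.exp_pos _)) hstrict
      rwa [Real.log_mul (hApos i0).ne' (Real.exp_ne_zero _), Real.log_exp] at h
    have H1 : ∑ i, X i * (Real.log (A i) + c i) < ∑ i, X i * Real.log (B i) :=
      Finset.sum_lt_sum (fun i _ => mul_le_mul_of_nonneg_left (hlog i) (hXpos i).le)
        ⟨i0, Finset.mem_univ i0, mul_lt_mul_of_pos_left hlogs (hXpos i0)⟩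
    simp only [hφA, hφB]
    apply neg_lt_neg
    rw [e2, e3]
    rw [e1] at H1
    rw [e4] at hXc
    linarith
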